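/- Let K be an algebraically closed field of characteristic 0 and a, b, c ∈ K, not all zero. For t ∈ K let γ(t) denote the 3×3 matrix with rows (1,0,0), (a·t,1,0), (b·t+(a·c/2)·t², c·t, 1). If F ∈ K[x,y,z] is irreducible and homogeneous, and for every t ∈ K there exists λ(t) ∈ K, λ(t) ≠ 0, with F∘γ(t) = λ(t)·F, then the degree of F is at most 2. -/

import Mathlib

open MvPolynomial

/-- The polynomial `F ∘ M`, obtained by substituting the variable `i` by
`∑ j, M i j * X j` in `F`. -/
noncomputable def applyMatrix {K : Type*} [Field K]
    (M : Matrix (Fin 3) (Fin 3) K) (F : MvPolynomial (Fin 3) K) :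
    MvPolynomial (Fin 3) K :=
  aeval (fun i => ∑ j : Fin 3, C (M i j) * X j) F

section Aux

variable {K : Type*} [Field K]

theorem primeX (i : Fin 3) : Prime (X i : MvPolynomial (Fin 3) K) := by
  have h : (X i : MvPolynomial (Fin 3) K)
      = rename ((↑) : ({i} : Set (Fin 3)) → Fin 3) (X ⟨i, rfl⟩) := by simp
  rw [h, prime_rename_iff]
  have e : ({i} : Set (Fin 3)) ≃ PUnit.{1} := Equiv.equivPUnit _
  rw [← MulEquiv.prime_iff (renameEquiv K e), ← MulEquiv.prime_iff (pUnitAlgEquiv K)]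
  simpa using Polynomial.prime_X

theorem evalSmul {F : MvPolynomial (Fin 3) K} {d : ℕ} (hF : F.IsHomogeneous d)
    (s : K) (v : Fin 3 → K) : eval (s • v) F = s ^ d * eval v F := by
  rw [eval_eq', eval_eq', Finset.mul_sum]
  apply Finset.sum_congr rfl
  intro m hm
  have hdeg : ∑ i, m i = d := by
    have h1 := hF (mem_support_iff.mp hm)
    change Finsupp.weight (fun _ => 1) m = d at h1
    rw [← Finsupp.degree_eq_weight_one] at h1
    rw [← h1, Finsupp.degree]
    exact (Finset.sum_subset (Finset.subset_univ _)
      (fun x _ hx => Finsupp.notMem_support_iff.mp hx)).symm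
  calc coeff m F * ∏ i, (s • v) i ^ m i
      = coeff m F * ∏ i, (s ^ m i * v i ^ m i) := by
        simp [Pi.smul_apply, smul_eq_mul, mul_pow]
    _ = s ^ d * (coeff m F * ∏ i, v i ^ m i) := by
        rw [Finset.prod_mul_distrib, Finset.prod_pow_eq_pow_sum, hdeg]; ring

theorem degle {F H : MvPolynomial (Fin 3) K} {d e : ℕ} (hF : F.IsHomogeneous d)
    (hH : H.IsHomogeneous e) (h0 : H ≠ 0) (hdvd : F ∣ H) : d ≤ e := by
  obtain ⟨W, rfl⟩ := hdvd
  have hF0 : F ≠ 0 := left_ne_zero_of_mul h0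
  have hW0 : W ≠ 0 := right_ne_zero_of_mul h0
  have hj : ∃ j, homogeneousComponent j W ≠ 0 := by
    by_contra hall
    push_neg at hall
    exact hW0 (by rw [← sum_homogeneousComponent W]
                  exact Finset.sum_eq_zero fun i _ => hall i)
  obtain ⟨j, hj⟩ := hj
  have hjle : j ≤ W.totalDegree := by
    by_contra hlt
    exact hj (homogeneousComponent_eq_zero _ W (lt_of_not_ge hlt))
  have key : homogeneousComponent (d + j) (F * W) = F * homogeneousComponent j W := by
    nth_rewrite 1 [← sum_homogeneousComponent W]
    rw [Finset.mul_sum, map_sum]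
    rw [Finset.sum_eq_single j]
    · rw [homogeneousComponent_of_mem
        ((mem_homogeneousSubmodule _ _).mpr (hF.mul (homogeneousComponent_isHomogeneous j W))),
        if_pos rfl]
    · intro i _ hij
      rw [homogeneousComponent_of_mem
        ((mem_homogeneousSubmodule _ _).mpr (hF.mul (homogeneousComponent_isHomogeneous i W))),
        if_neg (by omega)]
    · intro hnot
      exact absurd (Finset.mem_range.mpr (by omega)) hnot
  have h2 : homogeneousComponent (d + j) (F * W) = if d + j = e then F * W else 0 :=
    homogeneousComponent_of_mem ((mem_homogeneousSubmodule _ _).mpr hH)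
  by_cases he : d + j = e
  · omega
  · rw [h2, if_neg he] at key
    exact absurd key.symm (mul_ne_zero hF0 hj)

theorem dvdzeros {p q : MvPolynomial (Fin 3) K} [IsAlgClosed K] (hp : Prime p)
    (h : ∀ v : Fin 3 → K, eval v p = 0 → eval v q = 0) : p ∣ q := by
  have h1 : q ∈ vanishingIdeal K (zeroLocus K (Ideal.span {p})) := by
    rw [mem_vanishingIdeal_iff]
    intro x hx
    simpa using h x (by simpa using (mem_zeroLocus_iff.mp hx) p (Ideal.subset_span rfl))
  rwa [vanishingIdeal_zeroLocus_eq_radical,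
    ((Ideal.span_singleton_prime hp.ne_zero).mpr hp).radical,
    Ideal.mem_span_singleton] at h1

theorem evalApply (M : Matrix (Fin 3) (Fin 3) K) (F : MvPolynomial (Fin 3) K)
    (v : Fin 3 → K) :
    eval v (applyMatrix M F) = eval (M.mulVec v) F := by
  show (aeval v : MvPolynomial (Fin 3) K →ₐ[K] K) _ = _
  unfold applyMatrix
  rw [comp_aeval_apply (f := fun i => ∑ j : Fin 3, C (M i j) * X j)
    (aeval v : MvPolynomial (Fin 3) K →ₐ[K] K)]
  have h3 : (fun i => (aeval v : MvPolynomial (Fin 3) K →ₐ[K] K)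
      (∑ j : Fin 3, C (M i j) * X j)) = M.mulVec v := by
    funext i
    show eval v _ = _
    simp [Matrix.mulVec, dotProduct]
  rw [h3]
  rfl

theorem evalPolyAeval (h : Fin 3 → Polynomial K) (s : K) (F : MvPolynomial (Fin 3) K) :
    Polynomial.eval s (aeval h F) = eval (fun i => Polynomial.eval s (h i)) F := by
  show (Polynomial.aeval s : Polynomial K →ₐ[K] K) _ = _
  rw [comp_aeval_apply (f := h) (Polynomial.aeval s : Polynomial K →ₐ[K] K)]
  rfl

theorem dvd_unit_deg {F : MvPolynomial (Fin 3) K} {d : ℕ} {G : MvPolynomial (Fin 3) K}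
    {e : ℕ} (hirr : Irreducible F) (hhom : F.IsHomogeneous d) (hG : G.IsHomogeneous e)
    (hGp : Prime G) (hdvd : G ∣ F) : d ≤ e := by
  obtain ⟨W, hW⟩ := hdvd
  rcases hirr.isUnit_or_isUnit hW with h | h
  · exact absurd h hGp.not_unit
  · obtain ⟨u, hu⟩ := h
    have hdvd2 : F ∣ G := ⟨↑u⁻¹, by rw [hW, ← hu, mul_assoc]; simp⟩
    exact degle hhom hG hGp.ne_zero hdvd2

end Aux

theorem irreducible_invariant_curve_degree_le_two
    {K : Type*} [Field K] [IsAlgClosed K] [CharZero K] (a b c : K)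
    (habc : ¬(a = 0 ∧ b = 0 ∧ c = 0))
    (γ : K → Matrix (Fin 3) (Fin 3) K)
    (hγ : ∀ t, γ t = !![1, 0, 0; a * t, 1, 0;
        b * t + (a * c / 2) * t ^ 2, c * t, 1])
    (F : MvPolynomial (Fin 3) K) (hirr : Irreducible F) (d : ℕ)
    (hhom : F.IsHomogeneous d)
    (hinv : ∀ t : K, ∃ l : K, l ≠ 0 ∧ applyMatrix (γ t) F = MvPolynomial.C l * F) :
    d ≤ 2 := by
  have hFne : F ≠ 0 := hirr.ne_zero
  have hFprime : Prime F := UniqueFactorizationMonoid.irreducible_iff_prime.mp hirr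
  have hzero : ∀ (t : K) (v : Fin 3 → K), eval v F = 0 → eval ((γ t).mulVec v) F = 0 := by
    intro t v hv
    obtain ⟨l, _, heq⟩ := hinv t
    have h1 := congrArg (eval v) heq
    rw [evalApply] at h1
    rw [h1]
    simp [hv]
  have hmul : ∀ (t : K) (v : Fin 3 → K), (γ t).mulVec v
      = ![v 0, a * t * v 0 + v 1, (b * t + (a * c / 2) * t ^ 2) * v 0 + c * t * v 1 + v 2] := by
    intro t v
    rw [hγ]
    funext i
    fin_cases i <;>
      simp [Matrix.mulVec, dotProduct, Fin.sum_univ_three] <;> ring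
  by_cases ha : a = 0
  · -- case a = 0 : (b, c) ≠ (0,0)
    have hbc : ¬(b = 0 ∧ c = 0) := fun h => habc ⟨ha, h.1, h.2⟩
    set g : Polynomial K := aeval ![1, Polynomial.X, 0] F with hgdef
    have hgeval : ∀ s : K, g.eval s = eval ![(1:K), s, 0] F := by
      intro s
      rw [hgdef, evalPolyAeval]
      have hw : (fun i => Polynomial.eval s (![1, Polynomial.X, 0] i)) = ![(1:K), s, 0] := by
        funext i; fin_cases i <;> simp
      rw [hw]
    have hF0 : ∀ v : Fin 3 → K, b * v 0 + c * v 1 ≠ 0 → eval v F = 0 →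
        eval ![v 0, v 1, 0] F = 0 := by
      intro v hw hv
      set t0 : K := -(v 2) / (b * v 0 + c * v 1) with ht0
      have h1 := hzero t0 v hv
      rw [hmul] at h1
      have h2 : (![v 0, a * t0 * v 0 + v 1,
          (b * t0 + (a * c / 2) * t0 ^ 2) * v 0 + c * t0 * v 1 + v 2] : Fin 3 → K)
          = ![v 0, v 1, 0] := by
        funext i
        fin_cases i <;> simp [ha, ht0]
        field_simp
        ring
      rwa [h2] at h1
    by_cases hgz : g = 0
    · -- F vanishes on x ≠ 0, z = 0, so X 2 divides F
      have hd : (X 2 : MvPolynomial (Fin 3) K) ∣ X 0 * F := by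
        apply dvdzeros (primeX 2)
        intro v hv2
        have hv2' : v 2 = 0 := by simpa using hv2
        by_cases hv0 : v 0 = 0
        · simp [hv0]
        · have hveq : v = (v 0) • ![(1:K), v 1 / v 0, 0] := by
            funext i
            fin_cases i <;> simp [hv2'] <;> field_simp
          have hFv : eval v F = 0 := by
            rw [hveq, evalSmul hhom, ← hgeval, hgz]
            simp
          simp [hFv]
      have hXF : (X 2 : MvPolynomial (Fin 3) K) ∣ F := by
        rcases (primeX 2).dvd_or_dvd hd with h | h
        · exfalso
          obtain ⟨q, hq⟩ := h
          have := congrArg (eval ![(1:K), 0, 0]) hq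
          simp at this
        · exact h
      have := dvd_unit_deg hirr hhom (isHomogeneous_X K 2) (primeX 2) hXF
      omega
    · -- g ≠ 0
      set L : MvPolynomial (Fin 3) K := C b * X 0 + C c * X 1 with hLdef
      set fac : K → MvPolynomial (Fin 3) K := fun r => X 1 - C r * X 0 with hfacdef
      set P : MvPolynomial (Fin 3) K := (g.roots.map fac).prod with hPdef
      have hsub : ∀ v : Fin 3 → K, eval v F = 0 → eval v (L * (X 0 * P)) = 0 := by
        intro v hv
        by_cases hw : b * v 0 + c * v 1 = 0
        · simp [hLdef, hw]
        by_cases hv0 : v 0 = 0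
        · simp [hv0]
        · have hF00 := hF0 v hw hv
          have hveq : (![v 0, v 1, 0] : Fin 3 → K) = (v 0) • ![(1:K), v 1 / v 0, 0] := by
            funext i
            fin_cases i <;> simp <;> field_simp
          rw [hveq, evalSmul hhom, ← hgeval] at hF00
          have hroot : g.eval (v 1 / v 0) = 0 := by
            rcases mul_eq_zero.mp hF00 with h | h
            · exact absurd h (pow_ne_zero d hv0)
            · exact h
          have hmem : (v 1 / v 0) ∈ g.roots := by
            rw [Polynomial.mem_roots']
            exact ⟨hgz, hroot⟩
          have hfac0 : eval v (fac (v 1 / v 0)) = 0 := by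
            simp [hfacdef]
            field_simp
            ring
          have hP0 : eval v P = 0 := by
            rw [hPdef, ← Multiset.prod_hom _ (eval v)]
            apply Multiset.prod_eq_zero
            rw [← hfac0]
            exact Multiset.mem_map_of_mem _ (Multiset.mem_map_of_mem _ hmem)
          simp [hP0]
      have hdvd : F ∣ L * (X 0 * P) := dvdzeros hFprime hsub
      have hLhom : L.IsHomogeneous 1 := by
        apply MvPolynomial.IsHomogeneous.add <;> exact isHomogeneous_C_mul_X _ _
      have hLne : L ≠ 0 := by
        intro h0
        rcases (not_and_or.mp hbc) with hb | hc
        · have := congrArg (eval ![(1:K), 0, 0]) h0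
          simp [hLdef] at this
          exact hb this
        · have := congrArg (eval ![(0:K), 1, 0]) h0
          simp [hLdef] at this
          exact hc this
      rcases hFprime.dvd_or_dvd hdvd with h | h
      · have := degle hhom hLhom hLne h
        omega
      rcases hFprime.dvd_or_dvd h with h' | h'
      · have := degle hhom (isHomogeneous_X K 0) (X_ne_zero 0) h'
        omega
      · obtain ⟨q, hq, hdq⟩ := hFprime.exists_mem_multiset_dvd h'
        obtain ⟨r, _, rfl⟩ := Multiset.mem_map.mp hq
        have hfhom : (fac r).IsHomogeneous 1 := by
          apply MvPolynomial.IsHomogeneous.sub (isHomogeneous_X K 1)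
            (isHomogeneous_C_mul_X _ _)
        have hfne : fac r ≠ 0 := by
          intro h0
          have := congrArg (eval ![(0:K), 1, 0]) h0
          simp [hfacdef] at this
        have := degle hhom hfhom hfne hdq
        omega
  · -- case a ≠ 0
    have h2a : (2 : K) ≠ 0 := two_ne_zero
    set g : Polynomial K := aeval ![1, 0, Polynomial.X] F with hgdef
    have hgeval : ∀ s : K, g.eval s = eval ![(1:K), 0, s] F := by
      intro s
      rw [hgdef, evalPolyAeval]
      have hw : (fun i => Polynomial.eval s (![1, 0, Polynomial.X] i)) = ![(1:K), 0, s] := by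
        funext i; fin_cases i <;> simp
      rw [hw]
    have hroot : ∀ v : Fin 3 → K, v 0 ≠ 0 → eval v F = 0 →
        eval ![v 0, 0, (2*a*(v 0)*(v 2) - 2*b*(v 0)*(v 1) - c*(v 1)^2)/(2*a*(v 0))] F
          = 0 := by
      intro v hv0 hv
      set t0 : K := -(v 1) / (a * v 0) with ht0
      have h1 := hzero t0 v hv
      rw [hmul] at h1
      have h2 : (![v 0, a * t0 * v 0 + v 1,
          (b * t0 + (a * c / 2) * t0 ^ 2) * v 0 + c * t0 * v 1 + v 2] : Fin 3 → K)
          = ![v 0, 0, (2*a*(v 0)*(v 2) - 2*b*(v 0)*(v 1) - c*(v 1)^2)/(2*a*(v 0))] := by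
        funext i
        fin_cases i <;> simp [ht0]
        · field_simp
          try ring
        · field_simp
          ring_nf
          try field_simp
          try ring
      rwa [h2] at h1
    have hroot' : ∀ v : Fin 3 → K, v 0 ≠ 0 → eval v F = 0 →
        g.eval ((2*a*(v 0)*(v 2) - 2*b*(v 0)*(v 1) - c*(v 1)^2)/(2*a*(v 0)^2)) = 0 := by
      intro v hv0 hv
      have h1 := hroot v hv0 hv
      set s : K := (2*a*(v 0)*(v 2) - 2*b*(v 0)*(v 1) - c*(v 1)^2)/(2*a*(v 0)^2) with hs
      have h2 : (![v 0, 0, (2*a*(v 0)*(v 2) - 2*b*(v 0)*(v 1) - c*(v 1)^2)/(2*a*(v 0))]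
          : Fin 3 → K) = (v 0) • ![(1:K), 0, s] := by
        funext i
        fin_cases i <;> simp [hs]
        field_simp
      rw [h2, evalSmul hhom, ← hgeval] at h1
      rcases mul_eq_zero.mp h1 with h | h
      · exact absurd h (pow_ne_zero d hv0)
      · exact h
    by_cases hgz : g = 0
    · -- F vanishes on x ≠ 0, y = 0, so X 1 divides F
      have hd : (X 1 : MvPolynomial (Fin 3) K) ∣ X 0 * F := by
        apply dvdzeros (primeX 1)
        intro v hv1
        have hv1' : v 1 = 0 := by simpa using hv1
        by_cases hv0 : v 0 = 0
        · simp [hv0]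
        · have hveq : v = (v 0) • ![(1:K), 0, v 2 / v 0] := by
            funext i
            fin_cases i <;> simp [hv1'] <;> field_simp
          have hFv : eval v F = 0 := by
            rw [hveq, evalSmul hhom, ← hgeval, hgz]
            simp
          simp [hFv]
      have hXF : (X 1 : MvPolynomial (Fin 3) K) ∣ F := by
        rcases (primeX 1).dvd_or_dvd hd with h | h
        · exfalso
          obtain ⟨q, hq⟩ := h
          have := congrArg (eval ![(1:K), 0, 0]) hq
          simp at this
        · exact h
      have := dvd_unit_deg hirr hhom (isHomogeneous_X K 1) (primeX 1) hXF
      omega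
    · -- g ≠ 0
      set Qp : MvPolynomial (Fin 3) K :=
        C (2*a) * (X 0 * X 2) - C (2*b) * (X 0 * X 1) - C c * (X 1 * X 1) with hQdef
      set fac : K → MvPolynomial (Fin 3) K :=
        fun r => Qp - C (2*a*r) * (X 0 * X 0) with hfacdef
      set P : MvPolynomial (Fin 3) K := (g.roots.map fac).prod with hPdef
      have hfaceval : ∀ (r : K) (w : Fin 3 → K), eval w (fac r)
          = 2*a*(w 0)*(w 2) - 2*b*(w 0)*(w 1) - c*((w 1)*(w 1)) - 2*a*r*((w 0)*(w 0)) := by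
        intro r w
        rw [hfacdef]
        simp only [hQdef, map_sub, map_mul, eval_C, eval_X]
        ring
      have hsub : ∀ v : Fin 3 → K, eval v F = 0 → eval v (X 0 * P) = 0 := by
        intro v hv
        by_cases hv0 : v 0 = 0
        · simp [hv0]
        · have hs := hroot' v hv0 hv
          set s : K := (2*a*(v 0)*(v 2) - 2*b*(v 0)*(v 1) - c*(v 1)^2)/(2*a*(v 0)^2) with hsdef
          have hmem : s ∈ g.roots := by
            rw [Polynomial.mem_roots']
            exact ⟨hgz, hs⟩
          have hfac0 : eval v (fac s) = 0 := by
            rw [hfaceval, hsdef]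
            field_simp
            ring
          have hP0 : eval v P = 0 := by
            rw [hPdef, ← Multiset.prod_hom _ (eval v)]
            apply Multiset.prod_eq_zero
            rw [← hfac0]
            exact Multiset.mem_map_of_mem _ (Multiset.mem_map_of_mem _ hmem)
          simp [hP0]
      have hdvd : F ∣ X 0 * P := dvdzeros hFprime hsub
      rcases hFprime.dvd_or_dvd hdvd with h | h
      · have := degle hhom (isHomogeneous_X K 0) (X_ne_zero 0) h
        omega
      · obtain ⟨q, hq, hdq⟩ := hFprime.exists_mem_multiset_dvd h
        obtain ⟨r, _, rfl⟩ := Multiset.mem_map.mp hq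
        have hfhom : (fac r).IsHomogeneous 2 := by
          rw [hfacdef, hQdef]
          apply MvPolynomial.IsHomogeneous.sub
          apply MvPolynomial.IsHomogeneous.sub
          apply MvPolynomial.IsHomogeneous.sub
          all_goals
            exact (isHomogeneous_C _ _).mul ((isHomogeneous_X _ _).mul (isHomogeneous_X _ _))
        have hfne : fac r ≠ 0 := by
          intro h0
          have h1 := congrArg (eval ![(1:K), 0, r + 1]) h0
          rw [hfaceval] at h1
          simp at h1
          have h2 : 2 * a = 0 := by linear_combination h1
          rcases mul_eq_zero.mp h2 with h | h
          · exact absurd h h2a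
          · exact ha h
        exact degle hhom hfhom hfne hdq
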